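/- Let p ≥ 2, let A be a real n×d matrix of full column rank, b ∈ ℝ^n, and let w ∈ ℝ^n be strictly positive with w_i ≥ σ(W^{1/2−1/p}A)_i for all i, where W = diag(w). Set M = A^⊤W^{1−2/p}A and C_p = e·p^p. For u ∈ ℝ^d define H_f(u) = p(p−1)·A^⊤ diag(|Au−b|^{p−2}) A (the Hessian of x ↦ ‖Ax−b‖_p^p at u), and for x ≠ y define G(x,y) = pC_p‖x−y‖_M^{p−2} M + p(p−2)C_p‖x−y‖_M^{p−4} M(x−y)(x−y)^⊤M (the Hessian of x ↦ C_p‖x−y‖_M^p). Then for all x ≠ y in ℝ^d: (1/e)·(H_f(y) + G(x,y)) ⪯ H_f(x) + G(x,y) ⪯ e·(H_f(y) + G(x,y)) in the Loewner order. -/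

import Mathlib

open Matrix

section Helpers

lemma scalar_ineq' {q : ℝ} (hq : 0 ≤ q) (a b : ℝ) :
    |a + b| ^ q ≤ Real.exp 1 * |a| ^ q + (q + 1) ^ q * |b| ^ q := by
  rcases eq_or_lt_of_le hq with h0 | hq0
  · simp only [← h0, Real.rpow_zero]
    nlinarith [Real.add_one_le_exp (1:ℝ)]
  · have hconst : ((1 + 1/q) : ℝ) ^ q ≤ Real.exp 1 := by
      have h1 : (1 + 1/q : ℝ) ≤ Real.exp (1/q) := by
        have := Real.add_one_le_exp (1/q); linarith
      have h2 : (1 + 1/q : ℝ) ^ q ≤ Real.exp (1/q) ^ q :=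
        Real.rpow_le_rpow (by positivity) h1 hq
      have h3 : Real.exp (1/q) ^ q = Real.exp 1 := by
        rw [Real.rpow_def_of_pos (Real.exp_pos _), Real.log_exp]
        rw [one_div, inv_mul_cancel₀ (ne_of_gt hq0)]
      linarith [h2, h3.le, h3.ge]
    have habs : |a + b| ≤ max ((1 + 1/q) * |a|) ((1 + q) * |b|) := by
      rcases le_or_gt (|b|) (|a| / q) with h | h
      · refine le_trans (abs_add_le a b) (le_trans ?_ (le_max_left _ _))
        have : (1 + 1/q) * |a| = |a| + |a|/q := by field_simp
        rw [this]; linarith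
      · refine le_trans (abs_add_le a b) (le_trans ?_ (le_max_right _ _))
        have : |a| < q * |b| := by
          rw [div_lt_iff₀ hq0] at h; linarith [h]
        nlinarith
    have key : |a + b| ^ q ≤ ((1 + 1/q) * |a|) ^ q + ((1 + q) * |b|) ^ q := by
      rcases max_cases ((1 + 1/q) * |a|) ((1 + q) * |b|) with ⟨he, _⟩ | ⟨he, _⟩
      · rw [he] at habs
        have := Real.rpow_le_rpow (abs_nonneg _) habs hq
        have h2 : (0:ℝ) ≤ ((1 + q) * |b|) ^ q := Real.rpow_nonneg (by positivity) _
        linarith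
      · rw [he] at habs
        have := Real.rpow_le_rpow (abs_nonneg _) habs hq
        have h2 : (0:ℝ) ≤ ((1 + 1/q) * |a|) ^ q := Real.rpow_nonneg (by positivity) _
        linarith
    have e1 : ((1 + 1/q) * |a|) ^ q = (1 + 1/q) ^ q * |a| ^ q :=
      Real.mul_rpow (by positivity) (abs_nonneg _)
    have e2 : ((1 + q) * |b|) ^ q = (1 + q) ^ q * |b| ^ q :=
      Real.mul_rpow (by positivity) (abs_nonneg _)
    have h4 : (1 + 1/q) ^ q * |a| ^ q ≤ Real.exp 1 * |a| ^ q := by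
      have := Real.rpow_nonneg (abs_nonneg a) q
      nlinarith
    rw [e1, e2] at key
    have : (1 + q) = (q + 1) := by ring
    rw [this] at key
    linarith

lemma quad_diag' {n d : ℕ} (A : Matrix (Fin n) (Fin d) ℝ) (c : Fin n → ℝ) (v : Fin d → ℝ) :
    v ⬝ᵥ (Aᵀ * Matrix.diagonal c * A) *ᵥ v = ∑ i, c i * ((A *ᵥ v) i) ^ 2 := by
  rw [← Matrix.mulVec_mulVec, ← Matrix.mulVec_mulVec, Matrix.dotProduct_mulVec,
    Matrix.vecMul_transpose]
  simp only [dotProduct, Matrix.mulVec_diagonal]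
  exact Finset.sum_congr rfl fun i _ => by ring

lemma quad_vecMulVec' {d : ℕ} (a b v : Fin d → ℝ) :
    v ⬝ᵥ (Matrix.vecMulVec a b) *ᵥ v = (v ⬝ᵥ a) * (b ⬝ᵥ v) := by
  simp only [dotProduct, Matrix.mulVec, Matrix.vecMulVec_apply, dotProduct,
    Finset.mul_sum, Finset.sum_mul]
  rw [Finset.sum_comm]
  exact Finset.sum_congr rfl fun i _ => Finset.sum_congr rfl fun j _ => by ring

lemma cs_lemma' {d : ℕ} {M : Matrix (Fin d) (Fin d) ℝ} (hM : M.PosDef) (a u : Fin d → ℝ) :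
    (a ⬝ᵥ u) ^ 2 ≤ (a ⬝ᵥ M⁻¹ *ᵥ a) * (u ⬝ᵥ M *ᵥ u) := by
  have hMsym : Mᵀ = M := by
    have := hM.1; rwa [Matrix.IsHermitian, Matrix.conjTranspose_eq_transpose_of_trivial] at this
  have hMisym : (M⁻¹)ᵀ = M⁻¹ := by rw [Matrix.transpose_nonsing_inv, hMsym]
  rcases eq_or_ne u 0 with rfl | hu
  · simp
  · have hs : 0 < u ⬝ᵥ M *ᵥ u := by
      have := hM.dotProduct_mulVec_pos hu
      simpa using this
    have hMinv : M⁻¹.PosSemidef := hM.inv.posSemidef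
    set s := u ⬝ᵥ M *ᵥ u with hsdef
    set t := (a ⬝ᵥ u) / s with htdef
    have hinvmul : M⁻¹ * M = 1 :=
      Matrix.nonsing_inv_mul M ((Matrix.isUnit_iff_isUnit_det M).1 hM.isUnit)
    set g := a ⬝ᵥ M⁻¹ *ᵥ a with hgdef
    set c := a ⬝ᵥ u with hcdef
    have hexp : (a - t • (M *ᵥ u)) ⬝ᵥ M⁻¹ *ᵥ (a - t • (M *ᵥ u))
        = g - 2 * t * c + t ^ 2 * s := by
      have h1 : M⁻¹ *ᵥ (M *ᵥ u) = u := by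
        rw [Matrix.mulVec_mulVec, hinvmul, Matrix.one_mulVec]
      have h1' : (M *ᵥ u) ᵥ* M⁻¹ = u := by
        rw [← hMisym, Matrix.vecMul_transpose, h1]
      have h2 : (M *ᵥ u) ⬝ᵥ (M⁻¹ *ᵥ a) = c := by
        rw [Matrix.dotProduct_mulVec, h1', hcdef, dotProduct_comm]
      rw [Matrix.mulVec_sub, sub_dotProduct, dotProduct_sub,
        dotProduct_sub]
      rw [Matrix.mulVec_smul, smul_dotProduct, smul_dotProduct,
        dotProduct_smul, dotProduct_smul, h1, h2]
      rw [dotProduct_comm (M *ᵥ u) u, ← hsdef, ← hgdef, ← hcdef]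
      simp only [smul_eq_mul]
      ring
    have hnn : 0 ≤ g - 2 * t * c + t ^ 2 * s := by
      have := hMinv.dotProduct_mulVec_nonneg (a - t • (M *ᵥ u))
      rw [← hexp]
      simpa using this
    have hs' : s ≠ 0 := ne_of_gt hs
    have hmul : 0 ≤ (g - 2 * t * c + t ^ 2 * s) * s := mul_nonneg hnn hs.le
    have heq : (g - 2 * t * c + t ^ 2 * s) * s = g * s - c ^ 2 := by
      rw [htdef]; field_simp; ring
    rw [heq] at hmul
    linarith

lemma mulVec_inj' {n d : ℕ} (A : Matrix (Fin n) (Fin d) ℝ) (hA : A.rank = d)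
    {v : Fin d → ℝ} (h : A *ᵥ v = 0) : v = 0 := by
  have hker : LinearMap.ker A.mulVecLin = ⊥ := by
    have h1 := LinearMap.finrank_range_add_finrank_ker A.mulVecLin
    rw [Module.finrank_fin_fun] at h1
    have h2 : Module.finrank ℝ (LinearMap.range A.mulVecLin) = d := hA
    have h3 : Module.finrank ℝ (LinearMap.ker A.mulVecLin) = 0 := by omega
    exact Submodule.finrank_eq_zero.mp h3
  have : v ∈ LinearMap.ker A.mulVecLin := by
    simpa [Matrix.mulVecLin_apply] using h
  rw [hker] at this
  simpa using this

lemma M_posdef' {n d : ℕ} (A : Matrix (Fin n) (Fin d) ℝ) (hA : A.rank = d)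
    (c : Fin n → ℝ) (hc : ∀ i, 0 < c i) :
    (Aᵀ * Matrix.diagonal c * A).PosDef := by
  refine Matrix.PosDef.of_dotProduct_mulVec_pos ?_ ?_
  · simp only [Matrix.IsHermitian, Matrix.conjTranspose_eq_transpose_of_trivial,
      Matrix.transpose_mul, Matrix.transpose_transpose, Matrix.diagonal_transpose,
      Matrix.mul_assoc]
  · intro v hv
    have hform := quad_diag' A c v
    simp only [star_trivial]
    rw [hform]
    have hAv : A *ᵥ v ≠ 0 := fun h => hv (mulVec_inj' A hA h)
    obtain ⟨i, hi⟩ : ∃ i, (A *ᵥ v) i ≠ 0 := by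
      by_contra hcon
      push_neg at hcon
      exact hAv (funext hcon)
    apply Finset.sum_pos' (fun j _ => mul_nonneg (hc j).le (sq_nonneg _))
    exact ⟨i, Finset.mem_univ i,
      mul_pos (hc i) (pow_pos (abs_pos.mpr hi) 2 |>.trans_eq (by rw [sq_abs]))⟩

lemma final_arith1 {e hx hy g : ℝ} (he : 2 ≤ e) (h1 : hy ≤ e * hx + (e - 1) * g)
    (hg : 0 ≤ g) : 0 ≤ hx + g - e⁻¹ * (hy + g) := by
  have hepos : (0:ℝ) < e := by linarith
  have h2 : e⁻¹ * (hy + g) ≤ e⁻¹ * (e * hx + (e - 1) * g + g) := by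
    apply mul_le_mul_of_nonneg_left _ (by positivity)
    linarith
  have h3 : e⁻¹ * (e * hx + (e - 1) * g + g) = hx + g := by
    field_simp
    ring
  linarith

lemma final_arith2 {e hx hy g : ℝ} (h1 : hx ≤ e * hy + (e - 1) * g) :
    0 ≤ e * (hy + g) - (hx + g) := by nlinarith [h1]

end Helpers

/-- Leverage score of row `i` of matrix `M`: `σ(M)_i = m_i^⊤ (M^⊤ M)⁻¹ m_i`. -/
noncomputable def levScore {n d : ℕ} (M : Matrix (Fin n) (Fin d) ℝ) (i : Fin n) : ℝ :=
  M i ⬝ᵥ ((Mᵀ * M)⁻¹ *ᵥ M i)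

theorem stmt11 {n d : ℕ} (A : Matrix (Fin n) (Fin d) ℝ) (hA : A.rank = d)
    (b : Fin n → ℝ) (p : ℝ) (hp : 2 ≤ p)
    (w : Fin n → ℝ) (hw : ∀ i, 0 < w i)
    (hσ : ∀ i, levScore (Matrix.diagonal (fun j => w j ^ ((1:ℝ)/2 - 1/p)) * A) i ≤ w i)
    (M : Matrix (Fin d) (Fin d) ℝ)
    (hM : M = Aᵀ * Matrix.diagonal (fun i => w i ^ (1 - 2/p)) * A)
    (Cp : ℝ) (hCp : Cp = Real.exp 1 * p ^ p)
    (Hf : (Fin d → ℝ) → Matrix (Fin d) (Fin d) ℝ)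
    (hHf : ∀ u, Hf u =
      (p * (p - 1)) • (Aᵀ * Matrix.diagonal (fun i => |(A *ᵥ u - b) i| ^ (p - 2)) * A))
    (G : (Fin d → ℝ) → (Fin d → ℝ) → Matrix (Fin d) (Fin d) ℝ)
    (hG : ∀ x y, G x y =
      (p * Cp * Real.sqrt ((x - y) ⬝ᵥ (M *ᵥ (x - y))) ^ (p - 2)) • M +
      (p * (p - 2) * Cp * Real.sqrt ((x - y) ⬝ᵥ (M *ᵥ (x - y))) ^ (p - 4)) •
        Matrix.vecMulVec (M *ᵥ (x - y)) ((x - y) ᵥ* M))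
    (x y : Fin d → ℝ) (hxy : x ≠ y) :
    ((Hf x + G x y) - (Real.exp 1)⁻¹ • (Hf y + G x y)).PosSemidef ∧
    (Real.exp 1 • (Hf y + G x y) - (Hf x + G x y)).PosSemidef := by
  have hp0 : (0:ℝ) < p := by linarith
  have hq : (0:ℝ) ≤ p - 2 := by linarith
  -- positivity of diagonal weights
  have hWpos : ∀ i, 0 < w i ^ (1 - 2/p) := fun i => Real.rpow_pos_of_pos (hw i) _
  have hMpd : M.PosDef := by rw [hM]; exact M_posdef' A hA _ hWpos
  have hMsym : Mᵀ = M := by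
    have := hMpd.1
    rwa [Matrix.IsHermitian, Matrix.conjTranspose_eq_transpose_of_trivial] at this
  set u : Fin d → ℝ := x - y with hudef
  have hu : u ≠ 0 := sub_ne_zero.mpr hxy
  set s : ℝ := u ⬝ᵥ M *ᵥ u with hsdef
  have hs : 0 < s := by have := hMpd.dotProduct_mulVec_pos hu; simpa using this
  set r : ℝ := Real.sqrt s with hrdef
  have hr : 0 < r := Real.sqrt_pos.mpr hs
  have hrsq : r ^ 2 = s := Real.sq_sqrt hs.le
  have hppos : 0 < p ^ p := Real.rpow_pos_of_pos hp0 p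
  have hCppos : 0 < Cp := by rw [hCp]; positivity
  have he2 : (2:ℝ) ≤ Real.exp 1 := by nlinarith [Real.add_one_le_exp (1:ℝ)]
  -- leverage score consequence
  have hlev : ∀ i, A i ⬝ᵥ M⁻¹ *ᵥ A i ≤ w i ^ (2/p) := by
    intro i
    set N := Matrix.diagonal (fun j => w j ^ ((1:ℝ)/2 - 1/p)) * A with hNdef
    have hNtN : Nᵀ * N = M := by
      have hdd : (fun j => w j ^ ((1:ℝ)/2 - 1/p) * w j ^ ((1:ℝ)/2 - 1/p))
          = fun j => w j ^ (1 - 2/p) := by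
        funext j
        rw [← Real.rpow_add (hw j)]
        congr 1
        ring
      rw [hNdef, Matrix.transpose_mul, Matrix.diagonal_transpose, Matrix.mul_assoc,
        ← Matrix.mul_assoc (Matrix.diagonal _), Matrix.diagonal_mul_diagonal, hdd, hM,
        Matrix.mul_assoc]
    have hNrow : N i = (w i ^ ((1:ℝ)/2 - 1/p)) • A i := by
      funext j
      rw [hNdef, Matrix.diagonal_mul]
      rfl
    have hlS : levScore N i
        = w i ^ ((1:ℝ)/2 - 1/p) * (w i ^ ((1:ℝ)/2 - 1/p) * (A i ⬝ᵥ M⁻¹ *ᵥ A i)) := by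
      rw [levScore, hNtN, hNrow, smul_dotProduct, Matrix.mulVec_smul,
        dotProduct_smul]
      simp [smul_eq_mul]
    have hcc : w i ^ ((1:ℝ)/2 - 1/p) * w i ^ ((1:ℝ)/2 - 1/p) = w i ^ (1 - 2/p) := by
      rw [← Real.rpow_add (hw i)]
      congr 1
      ring
    have hb := hσ i
    rw [hlS, ← mul_assoc, hcc] at hb
    have hsplit : w i ^ (2/p) * w i ^ (1 - 2/p) = w i := by
      rw [← Real.rpow_add (hw i), show (2/p + (1 - 2/p) : ℝ) = 1 by ring, Real.rpow_one]
    have := (mul_le_mul_iff_of_pos_right (hWpos i)).mpr (le_refl (w i ^ (2/p)))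
    refine le_of_mul_le_mul_right ?_ (hWpos i)
    rw [hsplit]
    nlinarith [hb]
  -- per-row bound
  have hrow : ∀ i, |(A *ᵥ u) i| ≤ w i ^ (1/p) * r := by
    intro i
    have h1 := cs_lemma' hMpd (A i) u
    have h2 : (A *ᵥ u) i = A i ⬝ᵥ u := rfl
    have h3 : (A i ⬝ᵥ u) ^ 2 ≤ w i ^ (2/p) * s := by
      calc (A i ⬝ᵥ u) ^ 2 ≤ (A i ⬝ᵥ M⁻¹ *ᵥ A i) * s := by rw [hsdef]; exact h1
        _ ≤ w i ^ (2/p) * s := mul_le_mul_of_nonneg_right (hlev i) hs.le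
    have h4 : w i ^ (2/p) * s = (w i ^ (1/p) * r) ^ 2 := by
      rw [mul_pow, ← hrsq]
      congr 1
      rw [sq, ← Real.rpow_add (hw i)]
      congr 1
      ring
    rw [h2]
    have h5 : (A i ⬝ᵥ u) ^ 2 ≤ (w i ^ (1/p) * r) ^ 2 := by rw [← h4]; exact h3
    calc |A i ⬝ᵥ u| = Real.sqrt ((A i ⬝ᵥ u) ^ 2) := (Real.sqrt_sq_eq_abs _).symm
      _ ≤ Real.sqrt ((w i ^ (1/p) * r) ^ 2) := Real.sqrt_le_sqrt h5
      _ = w i ^ (1/p) * r := Real.sqrt_sq (mul_nonneg (Real.rpow_nonneg (hw i).le _) hr.le)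
  -- quadratic form of M
  have hmv : ∀ v : Fin d → ℝ, v ⬝ᵥ M *ᵥ v = ∑ i, w i ^ (1 - 2/p) * ((A *ᵥ v) i) ^ 2 := by
    intro v
    rw [hM]
    exact quad_diag' A _ v
  have hmvnn : ∀ v : Fin d → ℝ, 0 ≤ v ⬝ᵥ M *ᵥ v := by
    intro v
    rw [hmv]
    exact Finset.sum_nonneg fun i _ => mul_nonneg (hWpos i).le (sq_nonneg _)
  -- the key summation estimate
  have key : ∀ (v : Fin d → ℝ) (z1 z2 : Fin n → ℝ),
      (∀ i, |z1 i - z2 i| ≤ w i ^ (1/p) * r) →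
      (∑ i, |z1 i| ^ (p-2) * ((A *ᵥ v) i) ^ 2)
        ≤ Real.exp 1 * (∑ i, |z2 i| ^ (p-2) * ((A *ᵥ v) i) ^ 2)
          + (p-1) ^ (p-2) * r ^ (p-2) * (v ⬝ᵥ M *ᵥ v) := by
    intro v z1 z2 hz
    have hterm : ∀ i, |z1 i| ^ (p-2)
        ≤ Real.exp 1 * |z2 i| ^ (p-2) + (p-1) ^ (p-2) * (w i ^ (1 - 2/p) * r ^ (p-2)) := by
      intro i
      have h2 := scalar_ineq' hq (z2 i) (z1 i - z2 i)
      rw [show (p - 2 + 1 : ℝ) = p - 1 from by ring,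
        show z2 i + (z1 i - z2 i) = z1 i from by ring] at h2
      have h3 : |z1 i - z2 i| ^ (p-2) ≤ (w i ^ (1/p) * r) ^ (p-2) :=
        Real.rpow_le_rpow (abs_nonneg _) (hz i) hq
      have h4 : (w i ^ (1/p) * r) ^ (p-2) = w i ^ (1 - 2/p) * r ^ (p-2) := by
        rw [Real.mul_rpow (Real.rpow_nonneg (hw i).le _) hr.le,
          ← Real.rpow_mul (hw i).le]
        congr 1
        field_simp
      have h5 : (p-1 : ℝ) ^ (p-2) * |z1 i - z2 i| ^ (p-2)
          ≤ (p-1) ^ (p-2) * (w i ^ (1 - 2/p) * r ^ (p-2)) := by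
        rw [← h4]
        exact mul_le_mul_of_nonneg_left h3 (Real.rpow_nonneg (by linarith) _)
      linarith
    calc (∑ i, |z1 i| ^ (p-2) * ((A *ᵥ v) i) ^ 2)
        ≤ ∑ i, (Real.exp 1 * |z2 i| ^ (p-2)
            + (p-1) ^ (p-2) * (w i ^ (1 - 2/p) * r ^ (p-2))) * ((A *ᵥ v) i) ^ 2 :=
          Finset.sum_le_sum fun i _ => mul_le_mul_of_nonneg_right (hterm i) (sq_nonneg _)
      _ = Real.exp 1 * (∑ i, |z2 i| ^ (p-2) * ((A *ᵥ v) i) ^ 2)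
          + (p-1) ^ (p-2) * r ^ (p-2) * (∑ i, w i ^ (1 - 2/p) * ((A *ᵥ v) i) ^ 2) := by
          simp only [add_mul]
          rw [Finset.sum_add_distrib, Finset.mul_sum, Finset.mul_sum]
          congr 1
          · exact Finset.sum_congr rfl fun i _ => by ring
          · exact Finset.sum_congr rfl fun i _ => by ring
      _ = Real.exp 1 * (∑ i, |z2 i| ^ (p-2) * ((A *ᵥ v) i) ^ 2)
          + (p-1) ^ (p-2) * r ^ (p-2) * (v ⬝ᵥ M *ᵥ v) := by rw [hmv v]
  -- quadratic forms of Hf and G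
  have hHfv : ∀ (v z : Fin d → ℝ), v ⬝ᵥ (Hf z) *ᵥ v
      = p * (p-1) * ∑ i, |(A *ᵥ z - b) i| ^ (p-2) * ((A *ᵥ v) i) ^ 2 := by
    intro v z
    rw [hHf z, Matrix.smul_mulVec, dotProduct_smul, quad_diag']
    simp [smul_eq_mul]
  have hvm : u ᵥ* M = M *ᵥ u := by
    conv_lhs => rw [← hMsym]
    rw [Matrix.vecMul_transpose]
  have hGv : ∀ v : Fin d → ℝ, v ⬝ᵥ (G x y) *ᵥ v
      = p * Cp * r ^ (p-2) * (v ⬝ᵥ M *ᵥ v)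
        + p * (p-2) * Cp * r ^ (p-4) * (v ⬝ᵥ (M *ᵥ u)) ^ 2 := by
    intro v
    rw [hG x y, ← hudef, ← hsdef, ← hrdef, Matrix.add_mulVec, dotProduct_add,
      Matrix.smul_mulVec, Matrix.smul_mulVec, dotProduct_smul,
      dotProduct_smul, quad_vecMulVec', hvm]
    rw [dotProduct_comm (M *ᵥ u) v]
    simp only [smul_eq_mul]
    ring
  have hGvnn : ∀ v : Fin d → ℝ, 0 ≤ v ⬝ᵥ (G x y) *ᵥ v := by
    intro v
    rw [hGv v]
    have h1 : 0 ≤ p * Cp * r ^ (p-2) * (v ⬝ᵥ M *ᵥ v) := by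
      have := hmvnn v
      have h2 : (0:ℝ) ≤ r ^ (p-2) := Real.rpow_nonneg hr.le _
      positivity
    have h2 : 0 ≤ p * (p-2) * Cp * r ^ (p-4) * (v ⬝ᵥ (M *ᵥ u)) ^ 2 := by
      have h3 : (0:ℝ) ≤ r ^ (p-4) := Real.rpow_nonneg hr.le _
      have h4 : (0:ℝ) ≤ p - 2 := hq
      positivity
    linarith
  have hGvlb : ∀ v : Fin d → ℝ,
      p * Cp * r ^ (p-2) * (v ⬝ᵥ M *ᵥ v) ≤ v ⬝ᵥ (G x y) *ᵥ v := by
    intro v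
    rw [hGv v]
    have h3 : (0:ℝ) ≤ r ^ (p-4) := Real.rpow_nonneg hr.le _
    have h4 : (0:ℝ) ≤ p - 2 := hq
    have h5 : 0 ≤ p * (p-2) * Cp * r ^ (p-4) * (v ⬝ᵥ (M *ᵥ u)) ^ 2 := by positivity
    linarith
  -- difference of residuals
  have hdiff1 : ∀ i, |(A *ᵥ x - b) i - (A *ᵥ y - b) i| ≤ w i ^ (1/p) * r := by
    intro i
    have : (A *ᵥ x - b) i - (A *ᵥ y - b) i = (A *ᵥ u) i := by
      rw [hudef, Matrix.mulVec_sub]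
      simp
    rw [this]
    exact hrow i
  have hdiff2 : ∀ i, |(A *ᵥ y - b) i - (A *ᵥ x - b) i| ≤ w i ^ (1/p) * r := by
    intro i
    rw [abs_sub_comm]
    exact hdiff1 i
  -- the scalar constant bound
  have hfact : (p-1) ^ (p-1) ≤ (Real.exp 1 - 1) * Cp := by
    have h1 : (p-1 : ℝ) ^ (p-1) ≤ p ^ (p-1) :=
      Real.rpow_le_rpow (by linarith) (by linarith) (by linarith)
    have h2 : (p : ℝ) ^ (p-1) ≤ p ^ p :=
      Real.rpow_le_rpow_of_exponent_le (by linarith) (by linarith)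
    rw [hCp]
    nlinarith
  have hpm1 : (p - 1 : ℝ) * (p-1) ^ (p-2) = (p-1) ^ (p-1) := by
    rw [show (p-1 : ℝ) = 1 + (p-2) from by ring, Real.rpow_add (by linarith : (0:ℝ) < 1 + (p-2)),
      Real.rpow_one]
  -- the two claims
  have claim : ∀ v : Fin d → ℝ, ∀ z1 z2 : Fin d → ℝ,
      (∀ i, |(A *ᵥ z1 - b) i - (A *ᵥ z2 - b) i| ≤ w i ^ (1/p) * r) →
      v ⬝ᵥ (Hf z1) *ᵥ v ≤ Real.exp 1 * (v ⬝ᵥ (Hf z2) *ᵥ v)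
        + (Real.exp 1 - 1) * (v ⬝ᵥ (G x y) *ᵥ v) := by
    intro v z1 z2 hd
    have hk := key v (A *ᵥ z1 - b) (A *ᵥ z2 - b) hd
    rw [hHfv v z1, hHfv v z2]
    have hmul : p * (p-1) * (∑ i, |(A *ᵥ z1 - b) i| ^ (p-2) * ((A *ᵥ v) i) ^ 2)
        ≤ p * (p-1) * (Real.exp 1 * (∑ i, |(A *ᵥ z2 - b) i| ^ (p-2) * ((A *ᵥ v) i) ^ 2)
          + (p-1) ^ (p-2) * r ^ (p-2) * (v ⬝ᵥ M *ᵥ v)) := by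
      apply mul_le_mul_of_nonneg_left hk
      nlinarith
    have hrq : (0:ℝ) ≤ r ^ (p-2) := Real.rpow_nonneg hr.le _
    have hbig : p * (p-1) * ((p-1) ^ (p-2) * r ^ (p-2) * (v ⬝ᵥ M *ᵥ v))
        ≤ (Real.exp 1 - 1) * (v ⬝ᵥ (G x y) *ᵥ v) := by
      have e1 : p * (p-1) * ((p-1) ^ (p-2) * r ^ (p-2) * (v ⬝ᵥ M *ᵥ v))
          = (p-1) ^ (p-1) * (p * r ^ (p-2) * (v ⬝ᵥ M *ᵥ v)) := by
        rw [← hpm1]; ring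
      have e2 : (p-1) ^ (p-1) * (p * r ^ (p-2) * (v ⬝ᵥ M *ᵥ v))
          ≤ (Real.exp 1 - 1) * Cp * (p * r ^ (p-2) * (v ⬝ᵥ M *ᵥ v)) := by
        apply mul_le_mul_of_nonneg_right hfact
        have := hmvnn v
        positivity
      have e3 : (Real.exp 1 - 1) * Cp * (p * r ^ (p-2) * (v ⬝ᵥ M *ᵥ v))
          ≤ (Real.exp 1 - 1) * (v ⬝ᵥ (G x y) *ᵥ v) := by
        have h5 := hGvlb v
        have e4 : (Real.exp 1 - 1) * Cp * (p * r ^ (p-2) * (v ⬝ᵥ M *ᵥ v))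
            = (Real.exp 1 - 1) * (p * Cp * r ^ (p-2) * (v ⬝ᵥ M *ᵥ v)) := by ring
        rw [e4]
        apply mul_le_mul_of_nonneg_left h5 (by linarith)
      rw [e1]
      exact e2.trans e3
    calc p * (p-1) * (∑ i, |(A *ᵥ z1 - b) i| ^ (p-2) * ((A *ᵥ v) i) ^ 2)
        ≤ p * (p-1) * (Real.exp 1 * (∑ i, |(A *ᵥ z2 - b) i| ^ (p-2) * ((A *ᵥ v) i) ^ 2)
          + (p-1) ^ (p-2) * r ^ (p-2) * (v ⬝ᵥ M *ᵥ v)) := hmul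
      _ = Real.exp 1 * (p * (p-1) * ∑ i, |(A *ᵥ z2 - b) i| ^ (p-2) * ((A *ᵥ v) i) ^ 2)
          + p * (p-1) * ((p-1) ^ (p-2) * r ^ (p-2) * (v ⬝ᵥ M *ᵥ v)) := by ring
      _ ≤ Real.exp 1 * (p * (p-1) * ∑ i, |(A *ᵥ z2 - b) i| ^ (p-2) * ((A *ᵥ v) i) ^ 2)
          + (Real.exp 1 - 1) * (v ⬝ᵥ (G x y) *ᵥ v) := by linarith
  have claim1 := fun v => claim v x y hdiff1
  have claim2 := fun v => claim v y x hdiff2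
  -- Hermitian-ness
  have hHermHf : ∀ z, (Hf z)ᵀ = Hf z := by
    intro z
    rw [hHf z]
    simp [Matrix.transpose_smul, Matrix.transpose_mul, Matrix.diagonal_transpose,
      Matrix.transpose_transpose, Matrix.mul_assoc]
  have hHermG : (G x y)ᵀ = G x y := by
    rw [hG x y, ← hudef, hvm]
    have hvv : (Matrix.vecMulVec (M *ᵥ u) (M *ᵥ u))ᵀ = Matrix.vecMulVec (M *ᵥ u) (M *ᵥ u) := by
      ext i j
      simp [Matrix.vecMulVec_apply, Matrix.transpose_apply, mul_comm]
    rw [Matrix.transpose_add, Matrix.transpose_smul, Matrix.transpose_smul, hMsym, hvv]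
  have hermconv : ∀ N : Matrix (Fin d) (Fin d) ℝ, Nᵀ = N → N.IsHermitian := by
    intro N h
    rwa [Matrix.IsHermitian, Matrix.conjTranspose_eq_transpose_of_trivial]
  constructor
  · refine Matrix.PosSemidef.of_dotProduct_mulVec_nonneg (hermconv _ ?_) (fun v => ?_)
    · rw [Matrix.transpose_sub, Matrix.transpose_smul, Matrix.transpose_add,
        Matrix.transpose_add, hHermHf x, hHermHf y, hHermG]
    · simp only [star_trivial, Matrix.sub_mulVec, dotProduct_sub,
        Matrix.smul_mulVec, dotProduct_smul, Matrix.add_mulVec,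
        dotProduct_add, smul_eq_mul]
      exact final_arith1 he2 (claim2 v) (hGvnn v)
  · refine Matrix.PosSemidef.of_dotProduct_mulVec_nonneg (hermconv _ ?_) (fun v => ?_)
    · rw [Matrix.transpose_sub, Matrix.transpose_smul, Matrix.transpose_add,
        Matrix.transpose_add, hHermHf x, hHermHf y, hHermG]
    · simp only [star_trivial, Matrix.sub_mulVec, dotProduct_sub,
        Matrix.smul_mulVec, dotProduct_smul, Matrix.add_mulVec,
        dotProduct_add, smul_eq_mul]
      exact final_arith2 (claim1 v)
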